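/- Fix an integer m ≥ 1. For each n ∈ ℕ let G_n := {h ∈ F_n : h(I_n) ∩ I_m ≠ ∅}. Then lim_{n→∞} |G_n| / |F_n| = 0. -/

import Mathlib

open Filter

/-- The `h`-right hand-side partial shift `θ_h : ℤ → ℤ`. -/
def theta (h : ℤ) : ℤ → ℤ := fun k => if k < h then k else k + 1

/-- The composition `θ_{-n}^{c(-n)} ∘ θ_{-n+1}^{c(-n+1)} ∘ ⋯ ∘ θ_{n}^{c(n)}`. -/
def thetaProd (n : ℕ) (c : ℤ → ℕ) : ℤ → ℤ :=
  ((List.range (2 * n + 1)).map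
    (fun i => (theta (-(n : ℤ) + i))^[c (-(n : ℤ) + i)])).foldr (· ∘ ·) id

/-- The `n`-th set of the right Følner sequence of `𝕁_ℤ`: maps of the form
`θ_{-n}^{h_{-n}} ∘ ⋯ ∘ θ_{n}^{h_n} ∘ τ^l` with `∑ h_i ≤ n²` and `-n ≤ l ≤ n`. -/
def FolnerSet (n : ℕ) : Set (ℤ → ℤ) :=
  {h | ∃ (c : ℤ → ℕ) (l : ℤ),
    (∑ i ∈ Finset.Icc (-(n : ℤ)) (n : ℤ), c i) ≤ n ^ 2 ∧
    -(n : ℤ) ≤ l ∧ l ≤ (n : ℤ) ∧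
    h = (thetaProd n c) ∘ (fun k => k + l)}

/-- `I_m = {k ∈ ℤ : -m ≤ k ≤ m}`. -/
def Iset (m : ℤ) : Set ℤ := Set.Icc (-m) m


open Finset

lemma theta_iter_lt {h k : ℤ} (hk : k < h) (c : ℕ) : (theta h)^[c] k = k := by
  induction c with
  | zero => rfl
  | succ c ih => rw [Function.iterate_succ_apply, theta, if_pos hk, ih]

lemma theta_iter_le {h : ℤ} (c : ℕ) : ∀ {k : ℤ}, h ≤ k → (theta h)^[c] k = k + c := by
  induction c with
  | zero => simp
  | succ c ih =>
    intro k hk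
    rw [Function.iterate_succ_apply, theta, if_neg (by omega), ih (by omega)]
    push_cast; ring

/-- `auxProd a L c = θ_a^[c a] ∘ θ_{a+1}^[c (a+1)] ∘ ⋯ ∘ θ_{a+L-1}^[c (a+L-1)]`. -/
def auxProd (a : ℤ) : ℕ → (ℤ → ℕ) → ℤ → ℤ
  | 0, _ => id
  | (L+1), c => (theta a)^[c a] ∘ auxProd (a+1) L c

lemma foldr_eq_auxProd (c : ℤ → ℕ) : ∀ (L : ℕ) (a : ℤ),
    ((List.range L).map (fun i : ℕ => (theta (a + i))^[c (a + i)])).foldr (· ∘ ·) id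
      = auxProd a L c := by
  intro L
  induction L with
  | zero => intro a; rfl
  | succ L ih =>
    intro a
    rw [List.range_succ_eq_map, List.map_cons, List.foldr_cons, List.map_map]
    have h1 : ((fun i : ℕ => (theta (a + i))^[c (a + i)]) ∘ Nat.succ)
        = (fun i : ℕ => (theta (a + 1 + i))^[c (a + 1 + i)]) := by
      funext i
      have h2 : a + (Nat.succ i : ℕ) = a + 1 + (i : ℕ) := by push_cast; ring
      simp only [Function.comp_apply, h2]
    rw [h1, ih (a + 1)]
    simp [auxProd]

lemma thetaProd_eq_auxProd (n : ℕ) (c : ℤ → ℕ) :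
    thetaProd n c = auxProd (-(n:ℤ)) (2 * n + 1) c := by
  rw [← foldr_eq_auxProd c (2 * n + 1) (-(n:ℤ))]
  unfold thetaProd
  congr 1
  simp only [List.pure_def, List.bind_eq_flatMap]
  rw [show (List.flatMap (fun a : ℕ => [(a:ℤ)]) (List.range (2 * n + 1)))
      = (List.range (2 * n + 1)).map (fun a : ℕ => (a:ℤ)) from by
    induction (List.range (2 * n + 1)) with
    | nil => rfl
    | cons a l ih => simp [List.flatMap_cons, ih]]
  rw [List.map_map]
  rfl

lemma auxProd_apply (c : ℤ → ℕ) : ∀ (L : ℕ) (a x : ℤ),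
    auxProd a L c x = if x < a then x else x + ∑ j ∈ Finset.Icc a (min x (a + L - 1)), (c j : ℤ) := by
  intro L
  induction L with
  | zero =>
    intro a x
    rcases lt_or_ge x a with h | h
    · simp [auxProd, if_pos h]
    · rw [auxProd, if_neg (by omega)]
      rw [show min x (a + (0:ℕ) - 1) = a - 1 by push_cast; omega]
      simp
  | succ L ih =>
    intro a x
    rw [auxProd, Function.comp_apply, ih (a+1) x]
    rcases lt_or_ge x a with h | h
    · rw [if_pos (by omega), theta_iter_lt h, if_pos h]
    · rcases eq_or_lt_of_le h with heq | hgt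
      · subst heq
        rw [if_pos (by omega), theta_iter_le _ le_rfl, if_neg (by omega)]
        rw [show min a (a + ((L:ℕ)+1:ℕ) - 1) = a by push_cast; omega]
        rw [Finset.Icc_self, Finset.sum_singleton]
      · rw [if_neg (by omega)]
        have hsum : (0:ℤ) ≤ ∑ j ∈ Finset.Icc (a+1) (min x (a + 1 + L - 1)), (c j : ℤ) :=
          Finset.sum_nonneg fun j _ => by positivity
        rw [theta_iter_le _ (by omega), if_neg (by omega)]
        have hmin : min x (a + ((L:ℕ)+1:ℕ) - 1) = min x (a + 1 + L - 1) := by push_cast; omega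
        rw [hmin]
        have h3 : Finset.Icc a (min x (a + 1 + L - 1))
            = insert a (Finset.Icc (a+1) (min x (a + 1 + L - 1))) := by
          ext j; simp only [Finset.mem_Icc, Finset.mem_insert]; omega
        rw [h3, Finset.sum_insert (by simp)]
        ring

/-- Partial sums of `c` from `-n` to `x`. -/
noncomputable def Psum (n : ℕ) (c : ℤ → ℕ) (x : ℤ) : ℕ := ∑ j ∈ Finset.Icc (-(n:ℤ)) x, c j

lemma thetaProd_apply (n : ℕ) (c : ℤ → ℕ) (x : ℤ) :
    thetaProd n c x = if x < -(n:ℤ) then x else x + (Psum n c (min x n) : ℤ) := by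
  rw [thetaProd_eq_auxProd, auxProd_apply]
  have hb : -(n:ℤ) + ((2 * n + 1 : ℕ) : ℤ) - 1 = (n : ℤ) := by push_cast; ring
  rw [hb, Psum, Nat.cast_sum]

lemma thetaProd_low {n : ℕ} {x : ℤ} (c : ℤ → ℕ) (h : x < -(n:ℤ)) : thetaProd n c x = x := by
  rw [thetaProd_apply, if_pos h]

lemma thetaProd_mid {n : ℕ} {x : ℤ} (c : ℤ → ℕ) (h1 : -(n:ℤ) ≤ x) (h2 : x ≤ (n:ℤ)) :
    thetaProd n c x = x + (Psum n c x : ℤ) := by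
  rw [thetaProd_apply, if_neg (by omega), min_eq_left h2]

lemma thetaProd_high {n : ℕ} {x : ℤ} (c : ℤ → ℕ) (h : (n:ℤ) < x) :
    thetaProd n c x = x + (Psum n c n : ℤ) := by
  rw [thetaProd_apply, if_neg (by omega), min_eq_right (by omega)]

lemma thetaProd_congr {n : ℕ} {c c' : ℤ → ℕ}
    (h : ∀ j ∈ Finset.Icc (-(n:ℤ)) (n:ℤ), c j = c' j) : thetaProd n c = thetaProd n c' := by
  funext x
  rw [thetaProd_apply, thetaProd_apply]
  rcases lt_or_ge x (-(n:ℤ)) with hx | hx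
  · rw [if_pos hx, if_pos hx]
  · rw [if_neg (by omega), if_neg (by omega)]
    congr 2
    apply Finset.sum_congr rfl
    intro j hj
    simp only [Finset.mem_Icc] at hj
    exact h j (by simp only [Finset.mem_Icc]; omega)

noncomputable instance : DecidableEq (ℤ → ℕ) := fun _ _ => Classical.dec _

/-- Functions supported on `s` with sum at most `N`. -/
noncomputable def Dfin (s : Finset ℤ) (N : ℕ) : Finset (ℤ → ℕ) :=
  (Finset.range (N+1)).biUnion (fun t => Finset.piAntidiag s t)

lemma mem_Dfin {s : Finset ℤ} {N : ℕ} {c : ℤ → ℕ} :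
    c ∈ Dfin s N ↔ (∑ j ∈ s, c j) ≤ N ∧ ∀ j, c j ≠ 0 → j ∈ s := by
  simp only [Dfin, Finset.mem_biUnion, Finset.mem_range, Finset.mem_piAntidiag]
  constructor
  · rintro ⟨t, ht, hsum, hsupp⟩
    exact ⟨by rw [show (∑ j ∈ s, c j) = s.sum c from rfl, hsum]; omega, hsupp⟩
  · rintro ⟨hsum, hsupp⟩; exact ⟨∑ j ∈ s, c j, by omega, rfl, hsupp⟩

noncomputable def paramSet (n : ℕ) : Finset (ℤ × (ℤ → ℕ)) :=
  (Finset.Icc (-(n:ℤ)) (n:ℤ)) ×ˢ Dfin (Finset.Icc (-(n:ℤ)) (n:ℤ)) (n^2)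

def phi (n : ℕ) (p : ℤ × (ℤ → ℕ)) : ℤ → ℤ := thetaProd n p.2 ∘ (fun k => k + p.1)

/-- truncation of `c` to a finset -/
def trunc (s : Finset ℤ) (c : ℤ → ℕ) : ℤ → ℕ := fun j => if j ∈ s then c j else 0

lemma trunc_sum_eq (s : Finset ℤ) (c : ℤ → ℕ) (u : Finset ℤ) (hu : u ⊆ s) :
    ∑ j ∈ u, trunc s c j = ∑ j ∈ u, c j :=
  Finset.sum_congr rfl fun j hj => by simp [trunc, hu hj]

lemma FolnerSet_eq (n : ℕ) : FolnerSet n = phi n '' (paramSet n : Set (ℤ × (ℤ → ℕ))) := by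
  ext h
  constructor
  · rintro ⟨c, l, hsum, hl1, hl2, rfl⟩
    refine ⟨(l, trunc (Finset.Icc (-(n:ℤ)) (n:ℤ)) c), ?_, ?_⟩
    · simp only [Finset.coe_product, Set.mem_prod, paramSet, Finset.mem_coe,
        Finset.coe_mem, Set.mem_prod]
      constructor
      · simp only [Finset.mem_coe, Finset.mem_Icc]; omega
      · simp only [Finset.mem_coe, mem_Dfin]
        refine ⟨?_, ?_⟩
        · rw [trunc_sum_eq _ _ _ (subset_refl _)]; exact hsum
        · intro j hj
          by_contra hjs
          exact hj (by simp [trunc, hjs])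
    · unfold phi
      simp only
      rw [thetaProd_congr (c' := c) (fun j hj => by simp [trunc, hj])]
  · rintro ⟨⟨l, c⟩, hmem, rfl⟩
    simp only [Finset.coe_product, Set.mem_prod, Finset.mem_coe, paramSet] at hmem
    obtain ⟨hl, hc⟩ := hmem
    rw [mem_Dfin] at hc
    rw [Finset.mem_Icc] at hl
    exact ⟨c, l, hc.1, hl.1, hl.2, rfl⟩

lemma phi_injOn (n : ℕ) : Set.InjOn (phi n) (paramSet n : Set (ℤ × (ℤ → ℕ))) := by
  rintro ⟨l, c⟩ hp ⟨l', c'⟩ hp' heq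
  simp only [paramSet, Finset.coe_product, Set.mem_prod, Finset.mem_coe, Finset.mem_Icc,
    mem_Dfin] at hp hp'
  obtain ⟨⟨hl1, hl2⟩, hcsum, hcsupp⟩ := hp
  obtain ⟨⟨hl1', hl2'⟩, hcsum', hcsupp'⟩ := hp'
  -- evaluate far to the left to get l = l'
  have hk : ∀ k : ℤ, thetaProd n c (k + l) = thetaProd n c' (k + l') := fun k =>
    congrFun heq k
  have hll : l = l' := by
    have := hk (-(3*(n:ℤ) + 1))
    rw [thetaProd_low c (by omega), thetaProd_low c' (by omega)] at this
    omega
  subst hll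
  -- now thetaProd n c = thetaProd n c'
  have hx : ∀ x : ℤ, thetaProd n c x = thetaProd n c' x := by
    intro x
    have := hk (x - l)
    simpa using this
  have hP : ∀ x : ℤ, -(n:ℤ) ≤ x → x ≤ (n:ℤ) → Psum n c x = Psum n c' x := by
    intro x h1 h2
    have := hx x
    rw [thetaProd_mid c h1 h2, thetaProd_mid c' h1 h2] at this
    omega
  have hcc : c = c' := by
    funext j
    rcases Classical.em (j ∈ Finset.Icc (-(n:ℤ)) (n:ℤ)) with hj | hj
    · rw [Finset.mem_Icc] at hj
      rcases eq_or_lt_of_le hj.1 with hj1 | hj1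
      · -- j = -n
        subst hj1
        have := hP (-(n:ℤ)) (by omega) (by omega)
        unfold Psum at this
        rw [Finset.Icc_self, Finset.sum_singleton, Finset.sum_singleton] at this
        omega
      · -- -n < j
        have h1 := hP j (by omega) (by omega)
        have h2 := hP (j - 1) (by omega) (by omega)
        have hsplit : ∀ d : ℤ → ℕ, Psum n d j = Psum n d (j - 1) + d j := by
          intro d
          unfold Psum
          rw [show Finset.Icc (-(n:ℤ)) j = insert j (Finset.Icc (-(n:ℤ)) (j-1)) from by
            ext i; simp only [Finset.mem_Icc, Finset.mem_insert]; omega]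
          rw [Finset.sum_insert (by simp only [Finset.mem_Icc]; omega)]
          omega
        rw [hsplit c, hsplit c'] at h1
        omega
    · have := hcsupp j
      have := hcsupp' j
      by_contra hne
      rcases Nat.eq_zero_or_pos (c j) with h0 | h0
      · rcases Nat.eq_zero_or_pos (c' j) with h0' | h0'
        · omega
        · exact hj (Finset.mem_Icc.mpr (hcsupp' j (by omega)))
      · exact hj (Finset.mem_Icc.mpr (hcsupp j (by omega)))
  rw [hcc]

lemma FolnerSet_ncard (n : ℕ) : (FolnerSet n).ncard = (paramSet n).card := by
  rw [FolnerSet_eq, Set.ncard_image_of_injOn (phi_injOn n), Set.ncard_coe_finset]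

-- Stars and bars
lemma sum_multichoose (k t : ℕ) :
    ∑ j ∈ Finset.range (t+1), Nat.multichoose k j = Nat.multichoose (k+1) t := by
  induction t with
  | zero => simp
  | succ t ih =>
    rw [Finset.sum_range_succ, ih, Nat.multichoose_succ_succ k t, Nat.add_comm]

lemma card_piAntidiag (s : Finset ℤ) (t : ℕ) :
    (Finset.piAntidiag s t).card = Nat.multichoose s.card t := by
  induction s using Finset.cons_induction generalizing t with
  | empty =>
    rcases Nat.eq_zero_or_pos t with rfl | ht
    · simp [Nat.multichoose]
    · obtain ⟨t', rfl⟩ := Nat.exists_eq_succ_of_ne_zero (by omega : t ≠ 0)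
      rw [Finset.piAntidiag_empty_of_ne_zero (by omega)]
      simp [Nat.multichoose_zero_succ]
  | cons i s hi ih =>
    rw [Finset.piAntidiag_cons hi t, Finset.card_disjiUnion]
    simp only [Finset.card_map]
    rw [Finset.Nat.sum_antidiagonal_eq_sum_range_succ_mk]
    simp only [ih]
    rw [← Finset.sum_range_reflect]
    have : ∀ j ∈ Finset.range (t+1), Nat.multichoose s.card (t - (t + 1 - 1 - j))
        = Nat.multichoose s.card j := by
      intro j hj
      rw [Finset.mem_range] at hj
      congr 1
      omega
    rw [Finset.sum_congr rfl this, sum_multichoose, Finset.card_cons]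

lemma card_Dfin (s : Finset ℤ) (N : ℕ) :
    (Dfin s N).card = Nat.multichoose (s.card + 1) N := by
  rw [Dfin, Finset.card_biUnion, ← sum_multichoose]
  · exact Finset.sum_congr rfl fun t _ => card_piAntidiag s t
  · intro t1 h1 t2 h2 hne
    simp only [Finset.disjoint_left]
    intro c hc1 hc2
    rw [Finset.mem_piAntidiag] at hc1 hc2
    exact hne (hc1.1 ▸ hc2.1 ▸ rfl)

lemma card_paramSet (n : ℕ) :
    (paramSet n).card = (2*n+1) * Nat.multichoose (2*n+2) (n^2) := by
  rw [paramSet, Finset.card_product, card_Dfin, Int.card_Icc]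
  rw [show ((n:ℤ) + 1 - -(n:ℤ)).toNat = 2*n+1 from by omega]

lemma multichoose_mono (k : ℕ) : Monotone (fun t => Nat.multichoose (k+1) t) := by
  apply monotone_nat_of_le_succ
  intro t
  rw [Nat.multichoose_succ_succ]
  omega

noncomputable def badC (n : ℕ) (m : ℤ) : Finset (ℤ → ℕ) :=
  (Dfin (Finset.Icc (-(n:ℤ)) (n:ℤ)) (n^2)).filter
    (fun c => ∃ x ∈ Finset.Icc (-(n:ℤ)) (n:ℤ),
      -m ≤ x + (Psum n c x : ℤ) ∧ x + (Psum n c x : ℤ) ≤ m)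

lemma G_subset (n : ℕ) (m : ℤ) (hm : 1 ≤ m) (hmn : m ≤ (n:ℤ)) :
    {h ∈ FolnerSet n | (h '' Iset (n : ℤ)) ∩ Iset m ≠ ∅}
      ⊆ phi n '' ((Finset.Icc (-(n:ℤ)) (n:ℤ) ×ˢ badC n m : Finset (ℤ × (ℤ → ℕ))) :
          Set (ℤ × (ℤ → ℕ))) := by
  rintro h ⟨⟨c₀, l, hsum, hl1, hl2, rfl⟩, hne⟩
  set c := trunc (Finset.Icc (-(n:ℤ)) (n:ℤ)) c₀ with hc
  have hctp : thetaProd n c = thetaProd n c₀ :=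
    thetaProd_congr (fun j hj => by simp [c, trunc, hj])
  obtain ⟨y, hy1, hy2⟩ := Set.nonempty_iff_ne_empty.mpr hne
  obtain ⟨k, hk, rfl⟩ := hy1
  simp only [Iset, Set.mem_Icc] at hk hy2
  simp only [Function.comp_apply] at hy2
  refine ⟨(l, c), ?_, ?_⟩
  · rw [Finset.coe_product]
    refine Set.mem_prod.mpr ⟨by simp only [Finset.mem_coe, Finset.mem_Icc]; omega, ?_⟩
    simp only [Finset.mem_coe, badC, Finset.mem_filter]
    constructor
    · rw [mem_Dfin]
      refine ⟨?_, ?_⟩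
      · rw [hc, trunc_sum_eq _ _ _ (subset_refl _)]; exact hsum
      · intro j hj
        by_contra hjs
        exact hj (by simp [c, trunc, hjs])
    · -- badness witness
      set x := k + l with hx
      rcases lt_trichotomy x (-(n:ℤ)) with hlt | hcase
      · exfalso
        rw [← hctp, thetaProd_low c hlt] at hy2
        omega
      · rcases le_or_gt x (n:ℤ) with hle | hgt
        · refine ⟨x, by simp only [Finset.mem_Icc]; omega, ?_⟩
          rw [← hctp, thetaProd_mid c (by omega) hle] at hy2
          exact ⟨hy2.1, hy2.2⟩
        · exfalso
          rw [← hctp, thetaProd_high c hgt] at hy2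
          have : (0:ℤ) ≤ (Psum n c (n:ℤ) : ℤ) := by positivity
          omega
  · unfold phi
    simp only
    rw [hctp]

lemma card_slice (n : ℕ) (m x s' : ℤ) (hx1 : -(n:ℤ) ≤ x) (hx2 : x ≤ (n:ℤ))
    (hs1 : -m ≤ s') (hs2 : s' ≤ m) (hm : 1 ≤ m) :
    ((Dfin (Finset.Icc (-(n:ℤ)) (n:ℤ)) (n^2)).filter
        (fun c => x + (Psum n c x : ℤ) = s')).card
      ≤ (m.toNat + n).choose ((x + n).toNat)
        * Nat.multichoose ((2*n - (x+n).toNat) + 1) (n^2) := by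
  rcases lt_or_ge s' x with hlt | hge
  · rw [Finset.filter_false_of_mem, Finset.card_empty]
    · exact Nat.zero_le _
    · intro c _
      have : (0:ℤ) ≤ (Psum n c x : ℤ) := by positivity
      omega
  · set t := (s' - x).toNat with ht
    set a := (x + n).toNat with ha
    -- injection into product
    have key : ((Dfin (Finset.Icc (-(n:ℤ)) (n:ℤ)) (n^2)).filter
        (fun c => x + (Psum n c x : ℤ) = s')).card
        ≤ ((Finset.piAntidiag (Finset.Icc (-(n:ℤ)) x) t) ×ˢ
            (Dfin (Finset.Icc (x+1) (n:ℤ)) (n^2))).card := by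
      apply Finset.card_le_card_of_injOn
        (fun c => (trunc (Finset.Icc (-(n:ℤ)) x) c, trunc (Finset.Icc (x+1) (n:ℤ)) c))
      · intro c hc
        rw [Finset.mem_coe] at hc ⊢
        rw [Finset.mem_filter, mem_Dfin] at hc
        obtain ⟨⟨hcsum, hcsupp⟩, hcP⟩ := hc
        rw [Finset.mem_product]
        constructor
        · rw [Finset.mem_piAntidiag]
          refine ⟨?_, ?_⟩
          · rw [show Finset.sum _ _ = ∑ j ∈ Finset.Icc (-(n:ℤ)) x,
                trunc (Finset.Icc (-(n:ℤ)) x) c j from rfl]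
            rw [trunc_sum_eq _ _ _ (subset_refl _)]
            have : Psum n c x = t := by unfold Psum at hcP ⊢; omega
            exact this
          · intro j hj
            by_contra hjs
            exact hj (by simp [trunc, hjs])
        · rw [mem_Dfin]
          refine ⟨?_, ?_⟩
          · rw [trunc_sum_eq _ _ _ (subset_refl _)]
            refine le_trans (Finset.sum_le_sum_of_subset ?_) hcsum
            intro j hj; rw [Finset.mem_Icc] at *; omega
          · intro j hj
            by_contra hjs
            exact hj (by simp [trunc, hjs])
      · intro c hc c' hc' heq
        simp only [Finset.mem_coe, Finset.mem_filter, mem_Dfin] at hc hc'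
        have h1 := congrFun (congrArg Prod.fst heq)
        have h2 := congrFun (congrArg Prod.snd heq)
        simp only [trunc] at h1 h2
        funext j
        rcases Classical.em (j ∈ Finset.Icc (-(n:ℤ)) x) with hj | hj
        · have := h1 j; simp only [if_pos hj] at this; exact this
        · rcases Classical.em (j ∈ Finset.Icc (x+1) (n:ℤ)) with hj' | hj'
          · have := h2 j; simp only [if_pos hj'] at this; exact this
          · rw [Finset.mem_Icc] at hj hj'
            have hz : c j = 0 := by
              by_contra h0
              have := hc.1.2 j h0
              rw [Finset.mem_Icc] at this; omega
            have hz' : c' j = 0 := by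
              by_contra h0
              have := hc'.1.2 j h0
              rw [Finset.mem_Icc] at this; omega
            rw [hz, hz']
    rw [Finset.card_product, card_piAntidiag, card_Dfin] at key
    refine le_trans key ?_
    have hca : (Finset.Icc (-(n:ℤ)) x).card = a + 1 := by
      rw [Int.card_Icc]; omega
    have hcb : (Finset.Icc (x+1) (n:ℤ)).card = 2*n - a := by
      rw [Int.card_Icc]; omega
    rw [hca, hcb]
    apply Nat.mul_le_mul_right
    have hmono : Nat.multichoose (a+1) t ≤ Nat.multichoose (a+1) (m - x).toNat :=
      multichoose_mono a (show t ≤ (m - x).toNat from by omega)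
    refine le_trans hmono ?_
    apply le_of_eq
    rw [Nat.multichoose_eq]
    rw [show a + 1 + (m - x).toNat - 1 = m.toNat + n from by omega]
    rw [← Nat.choose_symm (show (m-x).toNat ≤ m.toNat + n from by omega)]
    congr 1
    omega

lemma card_badC (n : ℕ) (m : ℤ) (hm : 1 ≤ m) (hmn : m ≤ (n:ℤ)) :
    (badC n m).card ≤ (2*m.toNat+1) *
      ∑ a ∈ Finset.range (2*n+1),
        (m.toNat + n).choose a * Nat.multichoose ((2*n - a) + 1) (n^2) := by
  have hsub : badC n m ⊆ (Finset.Icc (-(n:ℤ)) (n:ℤ) ×ˢ Finset.Icc (-m) m).biUnion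
      (fun p => (Dfin (Finset.Icc (-(n:ℤ)) (n:ℤ)) (n^2)).filter
        (fun c => p.1 + (Psum n c p.1 : ℤ) = p.2)) := by
    intro c hc
    rw [badC, Finset.mem_filter] at hc
    obtain ⟨hcD, x, hx, hb1, hb2⟩ := hc
    rw [Finset.mem_biUnion]
    refine ⟨(x, x + (Psum n c x : ℤ)), ?_, ?_⟩
    · rw [Finset.mem_product]
      exact ⟨hx, Finset.mem_Icc.mpr ⟨hb1, hb2⟩⟩
    · rw [Finset.mem_filter]
      exact ⟨hcD, rfl⟩
  refine le_trans (Finset.card_le_card hsub) ?_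
  refine le_trans (Finset.card_biUnion_le) ?_
  rw [Finset.sum_product]
  have hbound : ∀ x ∈ Finset.Icc (-(n:ℤ)) (n:ℤ),
      ∑ s' ∈ Finset.Icc (-m) m,
        ((Dfin (Finset.Icc (-(n:ℤ)) (n:ℤ)) (n^2)).filter
          (fun c => x + (Psum n c x : ℤ) = s')).card
      ≤ (2*m.toNat+1) * ((m.toNat + n).choose ((x+n).toNat)
          * Nat.multichoose ((2*n - (x+n).toNat) + 1) (n^2)) := by
    intro x hx
    rw [Finset.mem_Icc] at hx
    have : ∀ s' ∈ Finset.Icc (-m) m,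
        ((Dfin (Finset.Icc (-(n:ℤ)) (n:ℤ)) (n^2)).filter
          (fun c => x + (Psum n c x : ℤ) = s')).card
        ≤ (m.toNat + n).choose ((x+n).toNat)
          * Nat.multichoose ((2*n - (x+n).toNat) + 1) (n^2) := by
      intro s' hs'
      rw [Finset.mem_Icc] at hs'
      exact card_slice n m x s' hx.1 hx.2 hs'.1 hs'.2 hm
    refine le_trans (Finset.sum_le_sum this) ?_
    rw [Finset.sum_const, Int.card_Icc, smul_eq_mul]
    apply Nat.mul_le_mul_right
    omega
  refine le_trans (Finset.sum_le_sum hbound) ?_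
  rw [← Finset.mul_sum]
  apply Nat.mul_le_mul_left
  apply le_of_eq
  apply Finset.sum_nbij' (i := fun x => (x + (n:ℤ)).toNat) (j := fun a => (a:ℤ) - n)
  · intro x hx; rw [Finset.mem_Icc] at hx; rw [Finset.mem_range]; omega
  · intro a ha; rw [Finset.mem_range] at ha; rw [Finset.mem_Icc]; omega
  · intro x hx; rw [Finset.mem_Icc] at hx; omega
  · intro a ha; rw [Finset.mem_range] at ha; omega
  · intro x hx; rfl

lemma multichoose_choose (L N : ℕ) : Nat.multichoose (L+1) N = (L + N).choose L := by
  rw [Nat.multichoose_eq, show L+1+N-1 = L+N from by omega]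
  rw [← Nat.choose_symm (show L ≤ L+N from by omega), show L+N-L = N from by omega]

lemma multichoose_identity (L N : ℕ) :
    (N + L + 1) * Nat.multichoose (L+1) N = (L+1) * Nat.multichoose (L+2) N := by
  rw [multichoose_choose, show L+2 = (L+1)+1 from rfl, multichoose_choose]
  have := Nat.add_one_mul_choose_eq (L + N) L
  rw [show N + L + 1 = L + N + 1 from by omega, this, show L+1+N = L+N+1 from by omega]
  ring

lemma step_ineq (n : ℕ) (hn : 1 ≤ n) (L : ℕ) (hL : L ≤ 2*n) :
    n * Nat.multichoose (L+1) (n^2) ≤ 3 * Nat.multichoose (L+2) (n^2) := by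
  have h1 : n^2 * Nat.multichoose (L+1) (n^2) ≤ (n^2 + L + 1) * Nat.multichoose (L+1) (n^2) :=
    Nat.mul_le_mul_right _ (by omega)
  rw [multichoose_identity L (n^2)] at h1
  have h2 : (L+1) * Nat.multichoose (L+2) (n^2) ≤ (3*n) * Nat.multichoose (L+2) (n^2) :=
    Nat.mul_le_mul_right _ (by omega)
  have h3 : n * (n * Nat.multichoose (L+1) (n^2)) ≤ n * (3 * Nat.multichoose (L+2) (n^2)) := by
    calc n * (n * Nat.multichoose (L+1) (n^2)) = n^2 * Nat.multichoose (L+1) (n^2) := by ring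
    _ ≤ (3*n) * Nat.multichoose (L+2) (n^2) := le_trans h1 h2
    _ = n * (3 * Nat.multichoose (L+2) (n^2)) := by ring
  exact Nat.le_of_mul_le_mul_left h3 (by omega)

lemma pow_ineq (n : ℕ) (hn : 1 ≤ n) : ∀ a, a ≤ 2*n →
    n^(a+1) * Nat.multichoose (2*n - a + 1) (n^2)
      ≤ 3^(a+1) * Nat.multichoose (2*n + 2) (n^2) := by
  intro a
  induction a with
  | zero =>
    intro _
    simpa using step_ineq n hn (2*n) le_rfl
  | succ a ih =>
    intro ha
    have hstep := step_ineq n hn (2*n - (a+1)) (by omega)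
    rw [show 2*n - (a+1) + 2 = 2*n - a + 1 from by omega] at hstep
    calc n^(a+1+1) * Nat.multichoose (2*n - (a+1) + 1) (n^2)
        = n^(a+1) * (n * Nat.multichoose (2*n - (a+1) + 1) (n^2)) := by ring
      _ ≤ n^(a+1) * (3 * Nat.multichoose (2*n - a + 1) (n^2)) :=
          Nat.mul_le_mul_left _ hstep
      _ = 3 * (n^(a+1) * Nat.multichoose (2*n - a + 1) (n^2)) := by ring
      _ ≤ 3 * (3^(a+1) * Nat.multichoose (2*n + 2) (n^2)) :=
          Nat.mul_le_mul_left _ (ih (by omega))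
      _ = 3^(a+1+1) * Nat.multichoose (2*n + 2) (n^2) := by ring

lemma sum_real_bound (n M : ℕ) (hn : M + 1 ≤ n) :
    ((∑ a ∈ Finset.range (2*n+1),
        (M + n).choose a * Nat.multichoose ((2*n - a) + 1) (n^2) : ℕ) : ℝ)
      ≤ (3/n) * (1+3/n)^(M+n) * (Nat.multichoose (2*n+2) (n^2) : ℝ) := by
  have hn1 : 1 ≤ n := by omega
  have hnR : (0:ℝ) < n := by positivity
  push_cast
  have hterm : ∀ a ∈ Finset.range (2*n+1),
      ((M + n).choose a : ℝ) * (Nat.multichoose ((2*n - a) + 1) (n^2) : ℝ)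
        ≤ ((M + n).choose a : ℝ) * ((3/n)^(a+1) * (Nat.multichoose (2*n+2) (n^2) : ℝ)) := by
    intro a ha
    rw [Finset.mem_range] at ha
    apply mul_le_mul_of_nonneg_left _ (by positivity)
    have := pow_ineq n hn1 a (by omega)
    have hcast : ((n:ℝ))^(a+1) * (Nat.multichoose (2*n - a + 1) (n^2) : ℝ)
        ≤ 3^(a+1) * (Nat.multichoose (2*n + 2) (n^2) : ℝ) := by
      exact_mod_cast this
    rw [div_pow, div_mul_eq_mul_div, le_div_iff₀ (by positivity)]
    calc (Nat.multichoose (2*n - a + 1) (n^2) : ℝ) * (n:ℝ)^(a+1)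
        = (n:ℝ)^(a+1) * (Nat.multichoose (2*n - a + 1) (n^2) : ℝ) := by ring
      _ ≤ 3^(a+1) * (Nat.multichoose (2*n + 2) (n^2) : ℝ) := hcast
  refine le_trans (Finset.sum_le_sum hterm) ?_
  have hfact : ∑ a ∈ Finset.range (2*n+1),
      ((M + n).choose a : ℝ) * ((3/n)^(a+1) * (Nat.multichoose (2*n+2) (n^2) : ℝ))
      = (3/n) * (Nat.multichoose (2*n+2) (n^2) : ℝ)
        * ∑ a ∈ Finset.range (2*n+1), (3/n)^a * ((M + n).choose a : ℝ) := by
    rw [Finset.mul_sum]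
    apply Finset.sum_congr rfl
    intro a _
    rw [pow_succ]
    ring
  rw [hfact]
  have hsum : ∑ a ∈ Finset.range (2*n+1), (3/(n:ℝ))^a * ((M + n).choose a : ℝ)
      = (1+3/n)^(M+n) := by
    rw [show ∑ a ∈ Finset.range (2*n+1), (3/(n:ℝ))^a * ((M + n).choose a : ℝ)
        = ∑ a ∈ Finset.range (M+n+1), (3/(n:ℝ))^a * ((M + n).choose a : ℝ) from ?_]
    · have := add_pow (3/(n:ℝ)) 1 (M+n)
      simp only [one_pow, mul_one] at this
      rw [show (1:ℝ)+3/n = 3/(n:ℝ)+1 from by ring, this]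
    · symm
      apply Finset.sum_subset
      · intro a ha; rw [Finset.mem_range] at *; omega
      · intro a _ ha
        rw [Finset.mem_range, not_lt] at ha
        rw [Nat.choose_eq_zero_of_lt (by omega)]
        simp
  rw [hsum]
  apply le_of_eq
  ring

lemma multichoose_pos (k N : ℕ) : 0 < Nat.multichoose (k+1) N := by
  rw [multichoose_choose]
  exact Nat.choose_pos (by omega)


theorem stmt0 (m : ℤ) (hm : 1 ≤ m) :
    Tendsto (fun n : ℕ =>
      (({h ∈ FolnerSet n | (h '' Iset (n : ℤ)) ∩ Iset m ≠ ∅}).ncard : ℝ)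
        / ((FolnerSet n).ncard : ℝ)) atTop (nhds 0) := by
  set M := m.toNat with hMdef
  have hM : (M:ℤ) = m := Int.toNat_of_nonneg (by omega)
  set K : ℝ := ((2*M+1 : ℕ) : ℝ) * 3 * Real.exp (3*M+3) with hK
  apply squeeze_zero' (g := fun n : ℕ => K / n)
  · filter_upwards with n
    positivity
  · filter_upwards [eventually_ge_atTop (M+1)] with n hn
    have hn1 : 1 ≤ n := by omega
    have hnR : (0:ℝ) < n := by positivity
    have hmn : m ≤ (n:ℤ) := by omega
    -- denominator
    have hF : (FolnerSet n).ncard = (2*n+1) * Nat.multichoose (2*n+2) (n^2) := by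
      rw [FolnerSet_ncard, card_paramSet]
    have hFpos : (0:ℝ) < ((FolnerSet n).ncard : ℝ) := by
      rw [hF]
      have := multichoose_pos (2*n+1) (n^2)
      positivity
    rw [div_le_div_iff₀ hFpos hnR]
    -- numerator bound
    have hGsub := G_subset n m hm hmn
    have hG1 : ({h ∈ FolnerSet n | (h '' Iset (n : ℤ)) ∩ Iset m ≠ ∅}).ncard
        ≤ (2*n+1) * (badC n m).card := by
      refine le_trans (Set.ncard_le_ncard hGsub
        (Set.Finite.image _ (Finset.finite_toSet _))) ?_
      refine le_trans (Set.ncard_image_le (Finset.finite_toSet _)) ?_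
      rw [Set.ncard_coe_finset, Finset.card_product, Int.card_Icc]
      apply Nat.mul_le_mul_right
      omega
    -- assemble in ℝ
    have hS := sum_real_bound n M hn
    have hexp : (1+3/(n:ℝ))^(M+n) ≤ Real.exp (3*M+3) := by
      have h1 : (1:ℝ)+3/n ≤ Real.exp (3/n) := by
        have := Real.add_one_le_exp (3/(n:ℝ))
        linarith
      have h2 : ((1:ℝ)+3/n)^(M+n) ≤ Real.exp (3/n)^(M+n) :=
        pow_le_pow_left₀ (by positivity) h1 _
      refine le_trans h2 ?_
      rw [← Real.exp_nat_mul]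
      apply Real.exp_le_exp.mpr
      rw [show ((M+n:ℕ):ℝ) * (3/↑n) = (3*((M:ℝ)+n))/n from by push_cast; ring,
        div_le_iff₀ hnR]
      push_cast
      have hMn1 : (0:ℝ) ≤ (M:ℝ) * ((n:ℝ) - 1) := by
        apply mul_nonneg (by positivity)
        have : (1:ℝ) ≤ (n:ℝ) := by exact_mod_cast hn1
        linarith
      nlinarith [hnR, hMn1]
    -- final chain
    set Snat : ℕ := ∑ a ∈ Finset.range (2*n+1),
      (M + n).choose a * Nat.multichoose ((2*n - a) + 1) (n^2) with hSnat
    have hG2 : (badC n m).card ≤ (2*M+1) * Snat := by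
      have h := card_badC n m hm hmn
      rw [hSnat, hMdef]
      exact h
    set D : ℝ := (Nat.multichoose (2*n+2) (n^2) : ℝ) with hD
    have hDpos : (0:ℝ) < D := by
      rw [hD]; exact_mod_cast multichoose_pos (2*n+1) (n^2)
    have h3n : (n:ℝ) * (3/n) = 3 := by field_simp
    calc (({h ∈ FolnerSet n | (h '' Iset (n : ℤ)) ∩ Iset m ≠ ∅}).ncard : ℝ) * n
        ≤ ((2*n+1) * (badC n m).card : ℕ) * (n:ℝ) := by
          apply mul_le_mul_of_nonneg_right _ (le_of_lt hnR)
          exact_mod_cast hG1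
      _ ≤ ((2*n+1) * ((2*M+1) * Snat) : ℕ) * (n:ℝ) := by
          apply mul_le_mul_of_nonneg_right _ (le_of_lt hnR)
          have : (2*n+1) * (badC n m).card ≤ (2*n+1) * ((2*M+1) * Snat) :=
            Nat.mul_le_mul_left _ hG2
          exact_mod_cast this
      _ = ((2*n+1:ℕ):ℝ) * ((2*M+1:ℕ):ℝ) * (n:ℝ) * (Snat:ℝ) := by push_cast; ring
      _ ≤ ((2*n+1:ℕ):ℝ) * ((2*M+1:ℕ):ℝ) * (n:ℝ) * ((3/n) * (1+3/n)^(M+n) * D) := by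
          apply mul_le_mul_of_nonneg_left hS (by positivity)
      _ ≤ ((2*n+1:ℕ):ℝ) * ((2*M+1:ℕ):ℝ) * (n:ℝ) * ((3/n) * Real.exp (3*M+3) * D) := by
          apply mul_le_mul_of_nonneg_left _ (by positivity)
          apply mul_le_mul_of_nonneg_right _ (le_of_lt hDpos)
          apply mul_le_mul_of_nonneg_left hexp (by positivity)
      _ = K * ((FolnerSet n).ncard : ℝ) := by
          rw [hF, hK]
          push_cast
          field_simp
          ring
  · exact tendsto_const_div_atTop_nhds_zero_nat K
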